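/- Let A be a real N×N matrix and b ∈ ℝ^N with rank[b, Ab, …, A^{N−1}b] = N. Then for every nonzero ζ ∈ ℝ^N the switching function g(t) = ⟨ζ, e^{−At} b⟩ is not identically zero on any nondegenerate interval, and g has at most finitely many zeros in every compact interval [0, r]. -/

import Mathlib

open scoped RealInnerProductSpace ENNReal NNReal
open MeasureTheory Filter

noncomputable section

/-- The proximal normal cone to `K` at `x`: vectors `v` such that for some `σ ≥ 0`,
`⟪v, y - x⟫ ≤ σ ‖y - x‖²` for all `y ∈ K`. -/
def proxNormalCone {H : Type*} [NormedAddCommGroup H] [InnerProductSpace ℝ H]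
    (K : Set H) (x : H) : Set H :=
  {v | ∃ σ : ℝ, 0 ≤ σ ∧ ∀ y ∈ K, ⟪v, y - x⟫ ≤ σ * ‖y - x‖ ^ 2}

/-- `K` has locally positive reach: there is a continuous `φ : K → [0,∞)` with
`⟪v, y - x⟫ ≤ φ x ‖v‖ ‖y - x‖²` for all `x, y ∈ K` and `v ∈ N_K(x)`. -/
def HasLocPosReach {H : Type*} [NormedAddCommGroup H] [InnerProductSpace ℝ H]
    (K : Set H) : Prop :=
  ∃ φ : H → ℝ, ContinuousOn φ K ∧ (∀ x ∈ K, 0 ≤ φ x) ∧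
    ∀ x ∈ K, ∀ v ∈ proxNormalCone K x, ∀ y ∈ K, ⟪v, y - x⟫ ≤ φ x * ‖v‖ * ‖y - x‖ ^ 2

/-- `ℝ^N` with the Euclidean inner product. -/
abbrev Euc (N : ℕ) := EuclideanSpace ℝ (Fin N)

/-- The pair `(x, β)` as an element of `E × ℝ` equipped with the L² (inner product) norm. -/
def pairLp {E : Type*} [NormedAddCommGroup E] [InnerProductSpace ℝ E] (x : E) (β : ℝ) :
    WithLp 2 (E × ℝ) := (WithLp.equiv 2 (E × ℝ)).symm (x, β)

/-- The epigraph of `f` restricted to the domain `D`: `{(x, β) : x ∈ D, β ≥ f x}`. -/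
def epigraphOn {E : Type*} [NormedAddCommGroup E] [InnerProductSpace ℝ E]
    (f : E → ℝ) (D : Set E) : Set (WithLp 2 (E × ℝ)) :=
  {p | (WithLp.equiv 2 (E × ℝ) p).1 ∈ D ∧
    f ((WithLp.equiv 2 (E × ℝ) p).1) ≤ (WithLp.equiv 2 (E × ℝ) p).2}

/-- `f` is non-Lipschitz at `x`: there are sequences `xs i ≠ ys i` converging to `x` with
`limsup |f (ys i) - f (xs i)| / ‖ys i - xs i‖ = +∞`. -/
def NonLipschitzAt {X : Type*} [NormedAddCommGroup X] (f : X → ℝ) (x : X) : Prop :=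
  ∃ xs ys : ℕ → X, (∀ i, xs i ≠ ys i) ∧ Tendsto xs atTop (nhds x) ∧ Tendsto ys atTop (nhds x) ∧
    limsup (fun i => ((|f (ys i) - f (xs i)| / ‖ys i - xs i‖ : ℝ) : EReal)) atTop = ⊤

/-- The matrix exponential `e^{tA}` acting on `ℝ^N`. -/
def expA {N : ℕ} (A : Matrix (Fin N) (Fin N) ℝ) (t : ℝ) : Euc N →ₗ[ℝ] Euc N :=
  Matrix.toEuclideanLin (NormedSpace.exp (t • A))

/-- Normality of the linear system `ẋ = Ax + Bu`: for every column `b i` of `B`,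
`rank [b i, A (b i), …, A^{N-1} (b i)] = N`. -/
def IsNormalPair {N M : ℕ} (A : Matrix (Fin N) (Fin N) ℝ) (b : Fin M → Euc N) : Prop :=
  ∀ i, Submodule.span ℝ
    (Set.range fun k : Fin N => Matrix.toEuclideanLin (A ^ (k : ℕ)) (b i)) = ⊤

/-- Admissible controls: measurable with values in `[-1,1]^M`. -/
def IsAdmissible {M : ℕ} (u : ℝ → Fin M → ℝ) : Prop :=
  Measurable u ∧ ∀ t i, u t i ∈ Set.Icc (-1 : ℝ) 1

/-- The trajectory of `ẏ = Ay + Bu`, `y 0 = x`: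
`y t = e^{At} x + ∫₀ᵗ e^{A(t-s)} B u s ds`. -/
def linTraj {N M : ℕ} (A : Matrix (Fin N) (Fin N) ℝ) (b : Fin M → Euc N)
    (x : Euc N) (u : ℝ → Fin M → ℝ) (t : ℝ) : Euc N :=
  expA A t x + ∫ s in (0:ℝ)..t, expA A (t - s) (∑ i, u s i • b i)

/-- The minimum time to reach the origin from `x` for the linear system. -/
def minTime {N M : ℕ} (A : Matrix (Fin N) (Fin N) ℝ) (b : Fin M → Euc N) (x : Euc N) : ℝ :=
  sInf {t : ℝ | 0 ≤ t ∧ ∃ u, IsAdmissible u ∧ linTraj A b x u t = 0}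

/-- The reachable set `R_t = {x : T x ≤ t}`. -/
def Rset {N M : ℕ} (A : Matrix (Fin N) (Fin N) ℝ) (b : Fin M → Euc N) (t : ℝ) : Set (Euc N) :=
  {x | minTime A b x ≤ t}

/-- The minimized Hamiltonian `h(x,ζ) = ⟪ζ, Ax⟫ - ∑ᵢ |⟪ζ, bᵢ⟫|` of the linear system. -/
def hLin {N M : ℕ} (A : Matrix (Fin N) (Fin N) ℝ) (b : Fin M → Euc N) (x ζ : Euc N) : ℝ :=
  ⟪ζ, Matrix.toEuclideanLin A x⟫ - ∑ i, |⟪ζ, b i⟫|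

/-- The set `S` of formula (4.4): points of the form
`x = ∑ᵢ ∫₀ʳ e^{A(t-r)} bᵢ sign ⟪ζ, e^{At} bᵢ⟫ dt` for some `r > 0` and a unit `ζ`
orthogonal to every `bᵢ`. -/
def Sset {N M : ℕ} (A : Matrix (Fin N) (Fin N) ℝ) (b : Fin M → Euc N) : Set (Euc N) :=
  {x | ∃ r : ℝ, 0 < r ∧ ∃ ζ : Euc N, ‖ζ‖ = 1 ∧
    (x = ∑ i, ∫ t in (0:ℝ)..r, Real.sign ⟪ζ, expA A t (b i)⟫ • expA A (t - r) (b i)) ∧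
    ∀ i, ⟪ζ, b i⟫ = 0}


section SwitchingAux

open NormedSpace

attribute [local instance] Matrix.linftyOpNormedAddCommGroup Matrix.linftyOpNormedRing
  Matrix.linftyOpNormedAlgebra

lemma iteratedDeriv_zero_fun' (n : ℕ) : iteratedDeriv n (fun _ : ℝ => (0 : ℝ)) = fun _ => 0 := by
  induction n with
  | zero => simp
  | succ n ih => rw [iteratedDeriv_succ, ih]; funext t; simp

lemma switching_analytic_and_derivs {N : ℕ} (A : Matrix (Fin N) (Fin N) ℝ) (b ζ : Euc N) :
    ∃ g : ℝ → ℝ, (∀ t : ℝ, g t = ⟪ζ, expA A (-t) b⟫) ∧ AnalyticOnNhd ℝ g Set.univ ∧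
      ((∀ t : ℝ, g t = 0) → ∀ k : ℕ, ⟪ζ, Matrix.toEuclideanLin (A ^ k) b⟫ = 0) := by
  haveI : CompleteSpace (Matrix (Fin N) (Fin N) ℝ) := FiniteDimensional.complete ℝ _
  set M : Matrix (Fin N) (Fin N) ℝ := -A with hM
  let φ : Matrix (Fin N) (Fin N) ℝ →L[ℝ] ℝ :=
    LinearMap.toContinuousLinearMap
      { toFun := fun m => ⟪ζ, Matrix.toEuclideanLin m b⟫
        map_add' := by intro x y; simp [inner_add_right]
        map_smul' := by intro c x; simp [inner_smul_right] }
  have hφ : ∀ m, φ m = ⟪ζ, Matrix.toEuclideanLin m b⟫ := fun m => rfl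
  refine ⟨fun t => φ (exp (t • M)), ?_, ?_, ?_⟩
  · intro t
    have h : (t • M) = (-t) • A := by rw [hM]; simp
    show φ (exp (t • M)) = _
    rw [h]
    rfl
  · intro t _
    exact (φ.analyticAt _).comp ((NormedSpace.exp_analytic _).comp
      (((ContinuousLinearMap.id ℝ ℝ).smulRight M).analyticAt t))
  · intro hzero k
    have hder : ∀ (n : ℕ) (t : ℝ),
        HasDerivAt (fun u : ℝ => φ (exp (u • M) * M ^ n))
          (φ (exp (t • M) * M ^ (n + 1))) t := by
      intro n t
      have h1 := hasDerivAt_exp_smul_const (𝕂 := ℝ) M t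
      have h2 := h1.mul_const (M ^ n)
      have h3 := φ.hasFDerivAt.comp_hasDerivAt t h2
      simp only [mul_assoc, pow_succ', Function.comp_def] at h3 ⊢; exact h3
    have hit : ∀ n : ℕ, iteratedDeriv n (fun u : ℝ => φ (exp (u • M) * M ^ 0))
        = fun t => φ (exp (t • M) * M ^ n) := by
      intro n
      induction n with
      | zero => simp [iteratedDeriv_zero]
      | succ n ih =>
        rw [iteratedDeriv_succ, ih]
        funext t
        exact (hder n t).deriv
    have hfun0 : (fun u : ℝ => φ (exp (u • M) * M ^ 0)) = fun _ : ℝ => (0 : ℝ) := by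
      funext u
      simpa using hzero u
    have hMk : φ (M ^ k) = 0 := by
      have := hit k
      rw [hfun0, iteratedDeriv_zero_fun'] at this
      have h0 := congrFun this 0
      simpa [exp_zero] using h0.symm
    have hMA : (M : Matrix (Fin N) (Fin N) ℝ) ^ k = ((-1 : ℝ) ^ k) • (A ^ k) := by
      rw [hM, ← neg_one_smul ℝ A, smul_pow]
    rw [hMA, _root_.map_smul] at hMk
    have hne : ((-1 : ℝ) ^ k) ≠ 0 := by positivity
    rw [smul_eq_mul, mul_eq_zero] at hMk
    have := hMk.resolve_left hne
    rwa [hφ] at this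

end SwitchingAux

/-- If `rank [b, Ab, …, A^{N-1} b] = N`, then for every `ζ ≠ 0` the switching
function `g t = ⟪ζ, e^{-At} b⟫` is not identically zero on any nondegenerate interval, and it has
at most finitely many zeros in every compact interval `[0, r]`. -/
theorem switching_function_not_identically_zero_and_finitely_many_zeros
    {N : ℕ} (A : Matrix (Fin N) (Fin N) ℝ) (b : Euc N)
    (hK : Submodule.span ℝ
      (Set.range fun k : Fin N => Matrix.toEuclideanLin (A ^ (k : ℕ)) b) = ⊤)
    (ζ : Euc N) (hζ : ζ ≠ 0) :
    (∀ a c : ℝ, a < c → ∃ t ∈ Set.Icc a c, ⟪ζ, expA A (-t) b⟫ ≠ 0) ∧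
    (∀ r : ℝ, {t ∈ Set.Icc (0:ℝ) r | ⟪ζ, expA A (-t) b⟫ = 0}.Finite) := by
  obtain ⟨g, hgval, hgan, hgder⟩ := switching_analytic_and_derivs A b ζ
  have hnotzero : ¬ (∀ t : ℝ, g t = 0) := by
    intro h
    have hzero := hgder h
    have hle : Submodule.span ℝ
        (Set.range fun k : Fin N => Matrix.toEuclideanLin (A ^ (k : ℕ)) b)
        ≤ LinearMap.ker ((innerSL ℝ ζ : Euc N →L[ℝ] ℝ) : Euc N →ₗ[ℝ] ℝ) := by
      rw [Submodule.span_le]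
      rintro x ⟨k, rfl⟩
      simpa [LinearMap.mem_ker] using hzero k
    rw [hK, top_le_iff] at hle
    have hζmem : ζ ∈ LinearMap.ker ((innerSL ℝ ζ : Euc N →L[ℝ] ℝ) : Euc N →ₗ[ℝ] ℝ) := by
      rw [hle]; trivial
    have : ⟪ζ, ζ⟫ = 0 := hζmem
    exact hζ (inner_self_eq_zero.mp this)
  have key : ∀ a c : ℝ, a < c → ∃ t ∈ Set.Icc a c, g t ≠ 0 := by
    intro a c hac
    by_contra h
    push_neg at h
    apply hnotzero
    intro t
    have hmem : ((a + c) / 2) ∈ Set.Icc a c := ⟨by linarith, by linarith⟩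
    have hnhds : Set.Icc a c ∈ nhds ((a + c) / 2) :=
      Icc_mem_nhds (by linarith) (by linarith)
    have hev : g =ᶠ[nhds ((a + c) / 2)] 0 :=
      Filter.eventually_of_mem hnhds fun x hx => h x hx
    have := hgan.eqOn_zero_of_preconnected_of_eventuallyEq_zero isPreconnected_univ
      (Set.mem_univ _) hev
    exact this (Set.mem_univ t)
  constructor
  · intro a c hac
    obtain ⟨t, ht, hgt⟩ := key a c hac
    exact ⟨t, ht, by rwa [← hgval t]⟩
  · intro r
    by_contra hinf
    have hZsub : {t ∈ Set.Icc (0:ℝ) r | ⟪ζ, expA A (-t) b⟫ = 0} ⊆ Set.Icc 0 r :=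
      fun t ht => ht.1
    obtain ⟨t₀, ht₀K, ht₀acc⟩ :=
      Set.Infinite.exists_accPt_of_subset_isCompact (hinf : Set.Infinite _) isCompact_Icc hZsub
    have hfreq : ∃ᶠ y in nhds t₀, y ≠ t₀ ∧ g y = 0 := by
      refine (accPt_iff_frequently.mp ht₀acc).mono ?_
      rintro y ⟨hy1, hy2⟩
      exact ⟨hy1, by rw [hgval]; exact hy2.2⟩
    have hfreq' : ∃ᶠ y in nhdsWithin t₀ {t₀}ᶜ, g y = 0 := by
      rw [frequently_nhdsWithin_iff]
      exact hfreq.mono fun y hy => ⟨hy.2, hy.1⟩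
    have hEq := hgan.eqOn_zero_of_preconnected_of_frequently_eq_zero isPreconnected_univ
      (Set.mem_univ t₀) hfreq'
    obtain ⟨t, _, hgt⟩ := key 0 1 one_pos
    exact hgt (hEq (Set.mem_univ t))
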